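/- arXiv:1507.08334 — 3 statements merged into one kernel-verified Lean document; each statement's English description precedes it below -/
import Mathlib

section
/- Let M be a closed subspace of L² that is invariant under multiplication by z⁻¹ (i.e., z⁻¹M ⊆ M) but not invariant under multiplication by z. Then there exists a unimodular function q (|q| = 1 a.e. on 𝕋) such that M = qH₂⁻ := {q·h : h ∈ H₂⁻}. -/
open MeasureTheory Complex Real Filter ComplexConjugate
open Topology

noncomputable section

set_option maxHeartbeats 1000000
set_option synthInstance.maxHeartbeats 400000

instance : Fact (0 < 2 * Real.pi) := ⟨by positivity⟩

/-- The unit circle, realized as `ℝ / 2πℤ`. -/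
abbrev UC := AddCircle (2 * Real.pi)

/-- Normalized arc-length (Haar probability) measure on the circle. -/
abbrev μc : Measure UC := AddCircle.haarAddCircle

/-- The Lebesgue space L² of the circle. -/
abbrev L2 := Lp ℂ 2 μc

/-- The Hardy space H² viewed inside L²: vanishing negative Fourier coefficients. -/
def H2set : Set L2 := {f | ∀ n : ℤ, n < 0 → fourierCoeff (⇑f) n = 0}

/-- The space H₂⁻: vanishing positive Fourier coefficients. -/
def H2negSet : Set L2 := {f | ∀ n : ℤ, 0 < n → fourierCoeff (⇑f) n = 0}

/-- The orthogonal complement H²^⊥ of H² in L²: vanishing coefficients for n ≥ 0. -/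
def HperpSet : Set L2 := {f | ∀ n : ℤ, 0 ≤ n → fourierCoeff (⇑f) n = 0}

/-- A function belongs to the Hardy space H²: square-integrable with vanishing
negative Fourier coefficients. -/
def MemH2 (f : UC → ℂ) : Prop :=
  MemLp f 2 μc ∧ ∀ n : ℤ, n < 0 → fourierCoeff f n = 0

/-- A unimodular function on the circle. -/
def Unimodular (q : UC → ℂ) : Prop :=
  AEStronglyMeasurable q μc ∧ ∀ᵐ x ∂μc, ‖q x‖ = 1

/-- An inner function: member of H² with unit modulus a.e. on the circle. -/
def IsInner (φ : UC → ℂ) : Prop :=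
  MemH2 φ ∧ ∀ᵐ x ∂μc, ‖φ x‖ = 1

/-- The backward shift U⋆, acting on boundary functions:
`(U⋆ f)(z) = (f(z) - f̂(0))/z`. -/
def bwShift (f : UC → ℂ) : UC → ℂ :=
  fun x => fourier (-1) x * (f x - fourierCoeff f 0)

/-- `f ∈ H²` is cyclic for the backward shift: the closed linear span of the
backward-shift orbit `{U⋆ⁿ f : n ≥ 0}` is all of H². -/
def CyclicBw (f : UC → ℂ) : Prop :=
  closure ((Submodule.span ℂ {u : L2 | ∃ n : ℕ, ⇑u =ᵐ[μc] bwShift^[n] f} : Submodule ℂ L2) : Set L2)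
    = H2set

/-- The subspace qH₂⁻ = {q·h : h ∈ H₂⁻} of L². -/
def qH2neg (q : UC → ℂ) : Set L2 :=
  {u | ∃ h : L2, h ∈ H2negSet ∧ ⇑u =ᵐ[μc] fun x => q x * (⇑h) x}

/-- a.e. unimodular function bundled with measurability. -/
structure Unim where
  q : UC → ℂ
  hm : AEStronglyMeasurable q μc
  hu : ∀ᵐ x ∂μc, ‖q x‖ = 1

namespace Unim

def conj' (Q : Unim) : Unim :=
  ⟨fun x => conj (Q.q x), Complex.continuous_conj.comp_aestronglyMeasurable Q.hm,
    by filter_upwards [Q.hu] with x hx; simpa using hx⟩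

def mul' (Q R : Unim) : Unim :=
  ⟨fun x => Q.q x * R.q x, Q.hm.mul R.hm,
    by filter_upwards [Q.hu, R.hu] with x hx hx'; simp [hx, hx']⟩

theorem memℒp_mul (Q : Unim) (f : L2) : MemLp (fun x => Q.q x * (⇑f) x) 2 μc := by
  refine MemLp.of_le (Lp.memLp f) (Q.hm.mul (Lp.aestronglyMeasurable f)) ?_
  filter_upwards [Q.hu] with x hx
  simp [hx]

def mulL (Q : Unim) (f : L2) : L2 := (Q.memℒp_mul f).toLp _

theorem coe_mulL (Q : Unim) (f : L2) : ⇑(Q.mulL f) =ᵐ[μc] fun x => Q.q x * (⇑f) x :=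
  MemLp.coeFn_toLp _

theorem mulL_add (Q : Unim) (f g : L2) : Q.mulL (f + g) = Q.mulL f + Q.mulL g := by
  apply Lp.ext
  filter_upwards [Q.coe_mulL (f+g), Q.coe_mulL f, Q.coe_mulL g, Lp.coeFn_add f g,
    Lp.coeFn_add (Q.mulL f) (Q.mulL g)] with x h1 h2 h3 h4 h5
  simp only [h1, h5, Pi.add_apply, h2, h3, h4]
  ring

theorem mulL_smul (Q : Unim) (c : ℂ) (f : L2) : Q.mulL (c • f) = c • Q.mulL f := by
  apply Lp.ext
  filter_upwards [Q.coe_mulL (c • f), Q.coe_mulL f, Lp.coeFn_smul c f,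
    Lp.coeFn_smul c (Q.mulL f)] with x h1 h2 h3 h4
  simp only [h1, h4, Pi.smul_apply, h2, h3, smul_eq_mul]
  ring

theorem norm_mulL (Q : Unim) (f : L2) : ‖Q.mulL f‖ = ‖f‖ := by
  rw [Lp.norm_def, Lp.norm_def]
  congr 1
  rw [eLpNorm_congr_ae (Q.coe_mulL f)]
  apply eLpNorm_congr_norm_ae
  filter_upwards [Q.hu] with x hx
  simp [hx]

theorem mulL_mulL (Q R : Unim) (f : L2) : Q.mulL (R.mulL f) = (Q.mul' R).mulL f := by
  apply Lp.ext
  filter_upwards [Q.coe_mulL (R.mulL f), (Q.mul' R).coe_mulL f, R.coe_mulL f] with x h1 h2 h3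
  rw [h1, h3, h2]
  exact (mul_assoc _ _ _).symm

theorem conj_mul_self_eq_one {z : ℂ} (hz : ‖z‖ = 1) : conj z * z = 1 := by
  rw [mul_comm, Complex.mul_conj, Complex.normSq_eq_norm_sq, hz]
  norm_num

theorem mulL_conj'_mulL (Q : Unim) (f : L2) : Q.conj'.mulL (Q.mulL f) = f := by
  apply Lp.ext
  filter_upwards [Q.conj'.coe_mulL (Q.mulL f), Q.coe_mulL f, Q.hu] with x h1 h2 h3
  rw [h1, h2, ← mul_assoc]
  have : Q.conj'.q x * Q.q x = 1 := conj_mul_self_eq_one h3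
  rw [this, one_mul]

theorem conj'_conj' (Q : Unim) : Q.conj'.conj' = Q := by simp [conj']

theorem mulL_mulL_conj' (Q : Unim) (f : L2) : Q.mulL (Q.conj'.mulL f) = f := by
  have := Q.conj'.mulL_conj'_mulL f
  rwa [Q.conj'_conj'] at this

def lm (Q : Unim) : L2 →ₗ[ℂ] L2 :=
  { toFun := Q.mulL, map_add' := Q.mulL_add, map_smul' := Q.mulL_smul }

/-- Multiplication by an a.e. unimodular function, as a linear isometry equivalence of L². -/
def iso (Q : Unim) : L2 ≃ₗᵢ[ℂ] L2 :=
  { toLinearEquiv := LinearEquiv.ofLinear Q.lm Q.conj'.lm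
      (LinearMap.ext fun f => Q.mulL_mulL_conj' f)
      (LinearMap.ext fun f => Q.mulL_conj'_mulL f)
    norm_map' := Q.norm_mulL }

theorem coe_iso (Q : Unim) (f : L2) : ⇑(Q.iso f) =ᵐ[μc] fun x => Q.q x * (⇑f) x := Q.coe_mulL f

theorem iso_apply (Q : Unim) (f : L2) : Q.iso f = Q.mulL f := rfl

end Unim

/-- Retraction of `ℂ` onto the closed unit ball. -/
def clampBall (z : ℂ) : ℂ := (max 1 ‖z‖)⁻¹ • z

theorem continuous_clampBall : Continuous clampBall :=
  (((continuous_const.max continuous_norm).inv₀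
    (fun z => by positivity)).smul continuous_id)

theorem norm_clampBall_le (z : ℂ) : ‖clampBall z‖ ≤ 1 := by
  have h1 : (0:ℝ) < max 1 ‖z‖ := by positivity
  rw [clampBall, norm_smul, norm_inv, Real.norm_eq_abs, abs_of_pos h1,
    inv_mul_le_iff₀ h1, mul_one]
  exact le_max_right _ _

theorem clampBall_of_le {z : ℂ} (hz : ‖z‖ ≤ 1) : clampBall z = z := by
  rw [clampBall, max_eq_left hz, inv_one, one_smul]

theorem integrable_contMul {w : UC → ℂ} (hw : Integrable w μc) (g : C(UC, ℂ)) :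
    Integrable (fun x => g x * w x) μc :=
  hw.bdd_mul g.continuous.aestronglyMeasurable (ae_of_all _ fun x => g.norm_coe_le_norm x)

/-- An integrable function on the circle whose Fourier coefficients all vanish is a.e. zero. -/
theorem ae_zero_of_fourierCoeff_zero {w : UC → ℂ} (hw : Integrable w μc)
    (h : ∀ n : ℤ, fourierCoeff w n = 0) : w =ᵐ[μc] 0 := by
  -- Step 1: integrals against continuous functions vanish
  have key : ∀ g : C(UC, ℂ), ∫ x, g x * w x ∂μc = 0 := by
    set Φ₀ : C(UC, ℂ) →ₗ[ℂ] ℂ :=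
      { toFun := fun g => ∫ x, g x * w x ∂μc
        map_add' := fun g g' => by
          simp only [ContinuousMap.add_apply, add_mul]
          exact integral_add (integrable_contMul hw g) (integrable_contMul hw g')
        map_smul' := fun c g => by
          simp only [ContinuousMap.smul_apply, smul_eq_mul, mul_assoc, RingHom.id_apply]
          rw [integral_const_mul] } with hΦ₀
    set Φ : C(UC, ℂ) →L[ℂ] ℂ := LinearMap.mkContinuous Φ₀ (∫ x, ‖w x‖ ∂μc) (by
      intro g
      have : ‖Φ₀ g‖ ≤ ‖g‖ * ∫ x, ‖w x‖ ∂μc := by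
        calc ‖∫ x, g x * w x ∂μc‖ ≤ ∫ x, ‖g x * w x‖ ∂μc := norm_integral_le_integral_norm _
        _ ≤ ∫ x, ‖g‖ * ‖w x‖ ∂μc := by
            refine integral_mono_of_nonneg (ae_of_all _ fun x => norm_nonneg _)
              (hw.norm.const_mul _) (ae_of_all _ fun x => ?_)
            show ‖g x * w x‖ ≤ ‖g‖ * ‖w x‖
            rw [norm_mul]
            exact mul_le_mul_of_nonneg_right (g.norm_coe_le_norm x) (norm_nonneg _)
        _ = ‖g‖ * ∫ x, ‖w x‖ ∂μc := by rw [integral_const_mul]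
      linarith [this, mul_comm ‖g‖ (∫ x, ‖w x‖ ∂μc)]) with hΦ
    have hspan : ∀ g ∈ Submodule.span ℂ (Set.range (@fourier (2 * Real.pi))), Φ g = 0 := by
      intro g hg
      induction hg using Submodule.span_induction with
      | mem g hg =>
        obtain ⟨n, rfl⟩ := hg
        show ∫ x, fourier n x * w x ∂μc = 0
        have := h (-n)
        rw [fourierCoeff] at this
        simpa [smul_eq_mul] using this
      | zero => simp
      | add f g _ _ hf hg => rw [map_add, hf, hg, add_zero]
      | smul c f _ hf => rw [_root_.map_smul, hf, smul_zero]
    have hdense : Dense ((Submodule.span ℂ (Set.range (@fourier (2 * Real.pi)))) : Set C(UC, ℂ)) := by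
      rw [Submodule.dense_iff_topologicalClosure_eq_top]
      exact span_fourier_closure_eq_top
    intro g
    have heq : (⇑Φ) = (fun _ => (0:ℂ)) :=
      Continuous.ext_on hdense Φ.continuous continuous_const (fun x hx => hspan x hx)
    exact congrFun heq g
  -- Step 2: set integrals vanish
  refine hw.ae_eq_zero_of_forall_setIntegral_eq_zero (fun s hs _ => ?_)
  classical
  set ind : UC → ℂ := s.indicator (fun _ => 1) with hind_def
  have hind : MemLp ind 1 μc := memLp_indicator_const 1 hs 1 (Or.inr (measure_ne_top μc s))
  set indL : Lp ℂ 1 μc := hind.toLp ind with hindL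
  have hd : DenseRange (ContinuousMap.toLp (E := ℂ) 1 μc ℂ) :=
    ContinuousMap.toLp_denseRange ℂ μc ℂ (by norm_num)
  obtain ⟨u, hu_mem, hu_tend⟩ := mem_closure_iff_seq_limit.mp (hd indL)
  choose g hg using hu_mem
  -- L¹ convergence of the functions
  have hnorm : Tendsto (fun k => ‖u k - indL‖) atTop (𝓝 0) := by
    rw [← tendsto_iff_norm_sub_tendsto_zero] at *
    exact hu_tend
  have help : ∀ k, eLpNorm (⇑(g k) - ind) 1 μc = ENNReal.ofReal ‖u k - indL‖ := by
    intro k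
    have h1 : eLpNorm (⇑(g k) - ind) 1 μc = eLpNorm (⇑(u k - indL)) 1 μc := by
      apply eLpNorm_congr_ae
      have hgk : ⇑(u k) =ᵐ[μc] ⇑(g k) := by
        rw [← hg k]; exact ContinuousMap.coeFn_toLp μc (g k)
      filter_upwards [Lp.coeFn_sub (u k) indL, hind.coeFn_toLp, hgk] with x h1 h2 h3
      simp only [Pi.sub_apply, h1, h3, h2]
      rw [hindL, h2]
    rw [h1, Lp.norm_def, ENNReal.ofReal_toReal (Lp.eLpNorm_ne_top _)]
  have heLp : Tendsto (fun k => eLpNorm (⇑(g k) - ind) 1 μc) atTop (𝓝 0) := by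
    simp only [help]
    have := (ENNReal.continuous_ofReal.tendsto 0).comp hnorm
    simpa [Function.comp_def, ofReal_norm] using this
  have hmeas : TendstoInMeasure μc (fun k => ⇑(g k)) atTop ind :=
    tendstoInMeasure_of_tendsto_eLpNorm one_ne_zero
      (fun k => (g k).continuous.aestronglyMeasurable) hind.aestronglyMeasurable heLp
  obtain ⟨ns, _, hae⟩ := hmeas.exists_seq_tendsto_ae
  -- dominated convergence
  have hdct : Tendsto (fun i => ∫ x, clampBall (g (ns i) x) * w x ∂μc) atTop
      (𝓝 (∫ x, ind x * w x ∂μc)) := by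
    refine tendsto_integral_of_dominated_convergence (fun x => ‖w x‖)
      (fun i => ((continuous_clampBall.comp (g (ns i)).continuous).aestronglyMeasurable).mul
        hw.aestronglyMeasurable) hw.norm ?_ ?_
    · intro i
      filter_upwards with x
      rw [norm_mul]
      exact mul_le_mul_of_nonneg_right (norm_clampBall_le _) (norm_nonneg _) |>.trans
        (by rw [one_mul])
    · filter_upwards [hae] with x hx
      have hind_norm : ‖ind x‖ ≤ 1 := by
        by_cases hxs : x ∈ s <;> simp [hind_def, Set.indicator_apply, hxs]
      have : Tendsto (fun i => clampBall (g (ns i) x)) atTop (𝓝 (clampBall (ind x))) :=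
        (continuous_clampBall.tendsto _).comp hx
      rw [clampBall_of_le hind_norm] at this
      exact this.mul_const _
  have hzero : ∀ i, ∫ x, clampBall (g (ns i) x) * w x ∂μc = 0 := fun i =>
    key ⟨fun x => clampBall (g (ns i) x), continuous_clampBall.comp (g (ns i)).continuous⟩
  have h2 : ∫ x, ind x * w x ∂μc = 0 :=
    tendsto_nhds_unique (by simpa only [hzero] using hdct) tendsto_const_nhds
  rw [← h2]
  have : ∀ x, ind x * w x = s.indicator w x := by
    intro x
    by_cases hxs : x ∈ s <;> simp [hind_def, Set.indicator_apply, hxs]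
  rw [← integral_indicator hs]
  exact (integral_congr_ae (ae_of_all _ this)).symm

local notation "⟪" x ", " y "⟫" => @inner ℂ _ _ x y

def eU (n : ℤ) : Unim :=
  ⟨fun x => fourier n x, (map_continuous (fourier n)).aestronglyMeasurable,
    ae_of_all _ fun x => by simp [fourier_apply, Circle.norm_coe]⟩

theorem eU_mulL_zero (f : L2) : (eU 0).mulL f = f := by
  apply Lp.ext
  filter_upwards [(eU 0).coe_mulL f] with x hx
  rw [hx]
  show fourier 0 x * _ = _
  rw [fourier_zero, one_mul]

theorem eU_mulL_mulL (m n : ℤ) (f : L2) :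
    (eU m).mulL ((eU n).mulL f) = (eU (m + n)).mulL f := by
  apply Lp.ext
  filter_upwards [(eU m).coe_mulL ((eU n).mulL f), (eU n).coe_mulL f,
    (eU (m + n)).coe_mulL f] with x h1 h2 h3
  rw [h1, h2, h3]
  show fourier m x * (fourier n x * _) = fourier (m + n) x * _
  rw [fourier_add]; ring

theorem fourierCoeff_congr_ae' {f g : UC → ℂ} (h : f =ᵐ[μc] g) (n : ℤ) :
    fourierCoeff f n = fourierCoeff g n := by
  simp only [fourierCoeff]
  apply integral_congr_ae
  filter_upwards [h] with x hx
  rw [hx]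

theorem inner_eU_mulL_left (n : ℤ) (f g : L2) :
    ⟪(eU n).mulL f, g⟫ = fourierCoeff (fun x => conj ((⇑f) x) * (⇑g) x) n := by
  rw [MeasureTheory.L2.inner_def]
  simp only [fourierCoeff]
  apply integral_congr_ae
  filter_upwards [(eU n).coe_mulL f] with x hx
  rw [RCLike.inner_apply, hx]
  show (⇑g) x * conj (fourier n x * (⇑f) x) = fourier (-n) x • (conj ((⇑f) x) * (⇑g) x)
  rw [map_mul, ← fourier_neg, smul_eq_mul]; ring

theorem inner_eU_mulL_right (n : ℤ) (f g : L2) :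
    ⟪f, (eU n).mulL g⟫ = fourierCoeff (fun x => conj ((⇑f) x) * (⇑g) x) (-n) := by
  rw [MeasureTheory.L2.inner_def]
  simp only [fourierCoeff]
  apply integral_congr_ae
  filter_upwards [(eU n).coe_mulL g] with x hx
  rw [RCLike.inner_apply, hx]
  show fourier n x * (⇑g) x * conj ((⇑f) x) = fourier (- -n) x • (conj ((⇑f) x) * (⇑g) x)
  rw [neg_neg, smul_eq_mul]; ring

theorem L2_eq_zero_of_fourierCoeff {f : L2} (h : ∀ n : ℤ, fourierCoeff (⇑f) n = 0) :
    f = 0 := by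
  have h2 : (fourierBasis (T := 2 * Real.pi)).repr f = 0 := by
    ext n
    rw [fourierBasis_repr]
    simp [h n]
  have h3 := congrArg (fourierBasis (T := 2 * Real.pi)).repr.symm h2
  simpa using h3

theorem fourierCoeff_fourierLp (k n : ℤ) :
    fourierCoeff (⇑(fourierLp (T := 2 * Real.pi) 2 k)) n = if n = k then 1 else 0 := by
  have h0 : (fourierLp (T := 2 * Real.pi) 2 k : L2) = fourierBasis k := by
    rw [coe_fourierBasis]
  rw [← fourierBasis_repr (T := 2 * Real.pi), h0, fourierBasis.repr_self, lp.single_apply]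
  simp [Pi.single_apply]

def coeffCLM (n : ℤ) : L2 →L[ℂ] ℂ := innerSL ℂ (fourierBasis (T := 2 * Real.pi) n)

theorem coeffCLM_apply (n : ℤ) (f : L2) : coeffCLM n f = fourierCoeff (⇑f) n := by
  rw [coeffCLM, innerSL_apply_apply, ← fourierBasis.repr_apply_apply, fourierBasis_repr]

def H2negSub : Submodule ℂ L2 := ⨅ n : {m : ℤ // 0 < m}, (coeffCLM n).ker

theorem mem_H2negSub {f : L2} : f ∈ H2negSub ↔ ∀ n : ℤ, 0 < n → fourierCoeff (⇑f) n = 0 := by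
  rw [H2negSub, Submodule.mem_iInf]
  constructor
  · intro h n hn
    have := h ⟨n, hn⟩
    rwa [LinearMap.mem_ker, ContinuousLinearMap.coe_coe, coeffCLM_apply] at this
  · intro h n
    rw [LinearMap.mem_ker, ContinuousLinearMap.coe_coe, coeffCLM_apply]
    exact h n n.2

theorem isClosed_H2negSub : IsClosed (H2negSub : Set L2) := by
  have h1 : (H2negSub : Set L2)
      = ⋂ n : {m : ℤ // 0 < m}, ((coeffCLM n).ker : Set L2) := by
    rw [H2negSub]
    simp [Submodule.coe_iInf]
  rw [h1]
  exact isClosed_iInter fun n => ContinuousLinearMap.isClosed_ker (coeffCLM ↑n)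

theorem fourierLp_mem_H2negSub {k : ℤ} (hk : k ≤ 0) :
    (fourierLp 2 k : L2) ∈ H2negSub := by
  rw [mem_H2negSub]
  intro n hn
  rw [fourierCoeff_fourierLp, if_neg (by omega)]

theorem fourierCoeff_one (n : ℤ) :
    fourierCoeff (fun _ : UC => (1 : ℂ)) n = if n = 0 then 1 else 0 := by
  have h1 : fourierCoeff (fun _ : UC => (1:ℂ)) n
      = fourierCoeff (⇑(fourierLp (T := 2 * Real.pi) 2 0)) n := by
    apply integral_congr_ae
    filter_upwards [coeFn_fourierLp (T := 2 * Real.pi) 2 0] with x hx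
    rw [hx, fourier_zero]
  rw [h1, fourierCoeff_fourierLp]

/-- Beurling–Lax type theorem in L²: a closed subspace invariant under multiplication by
`z⁻¹` but not under multiplication by `z` is of the form `qH₂⁻` for a unimodular `q`. -/
theorem stmt1 (M : Submodule ℂ L2) (hclosed : IsClosed (M : Set L2))
    (hinv : ∀ f ∈ M, ∀ g : L2, (⇑g =ᵐ[μc] fun x => fourier (-1) x * (⇑f) x) → g ∈ M)
    (hnotinv : ¬ (∀ f ∈ M, ∀ g : L2, (⇑g =ᵐ[μc] fun x => fourier 1 x * (⇑f) x) → g ∈ M)) :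
    ∃ q : UC → ℂ, Unimodular q ∧ (M : Set L2) = qH2neg q := by
  classical
  -- multiplication by z⁻¹ as a linear isometry, and the subspace z⁻¹M
  set M₁ : Submodule ℂ L2 := M.map ((eU (-1)).iso.toLinearEquiv.toLinearMap) with hM₁
  have hM₁M : M₁ ≤ M := by
    intro u hu
    obtain ⟨f, hf, rfl⟩ := Submodule.mem_map.mp hu
    exact hinv f hf _ ((eU (-1)).coe_mulL f)
  have hM₁closed : IsClosed (M₁ : Set L2) := by
    have h1 : (M₁ : Set L2) = ⇑((eU (-1)).iso) '' (M : Set L2) := by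
      rw [hM₁, Submodule.map_coe]; rfl
    rw [h1]
    exact ((eU (-1)).iso.toHomeomorph.isClosed_image).mpr hclosed
  -- M₁ is a proper subspace of M
  have hne : M₁ ≠ M := by
    intro heq
    apply hnotinv
    intro f hf g hg
    rw [← heq] at hf
    obtain ⟨f', hf', hff⟩ := Submodule.mem_map.mp hf
    have hgf' : g = f' := by
      apply Lp.ext
      have hcoe : ⇑f =ᵐ[μc] fun x => fourier (-1) x * (⇑f') x := by
        rw [← hff]; exact (eU (-1)).coe_mulL f'
      filter_upwards [hg, hcoe] with x h1 h2
      rw [h1, h2, ← mul_assoc, ← fourier_add]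
      have h3 : (1 : ℤ) + -1 = 0 := by norm_num
      rw [h3, fourier_zero, one_mul]
    rw [hgf']; exact hf'
  -- choose a unit vector qel in M ⊖ M₁
  have hlt : M₁ < M := lt_of_le_of_ne hM₁M hne
  obtain ⟨x0, hx0M, hx0M₁⟩ := SetLike.exists_of_lt hlt
  haveI : CompleteSpace M₁ := hM₁closed.completeSpace_coe
  set q0 : L2 := x0 - (M₁.orthogonalProjectionOnto x0 : L2) with hq0
  have hq0M : q0 ∈ M := M.sub_mem hx0M (hM₁M (M₁.orthogonalProjectionOnto x0).2)
  have hq0perp : q0 ∈ M₁ᗮ := M₁.sub_starProjection_mem_orthogonal x0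
  have hq0ne : q0 ≠ 0 := by
    intro h0
    apply hx0M₁
    rw [hq0, sub_eq_zero] at h0
    rw [h0]
    exact (M₁.orthogonalProjectionOnto x0).2
  set qel : L2 := ((‖q0‖ : ℂ)⁻¹) • q0 with hqel
  have hqelM : qel ∈ M := M.smul_mem _ hq0M
  have hqelperp : qel ∈ M₁ᗮ := Submodule.smul_mem _ _ hq0perp
  have hqel_norm : ‖qel‖ = 1 := by
    rw [hqel, norm_smul, norm_inv]
    have h1 : ‖((‖q0‖ : ℝ) : ℂ)‖ = ‖q0‖ := by
      rw [Complex.norm_real, Real.norm_eq_abs]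
      exact abs_of_nonneg (norm_nonneg _)
    rw [h1]
    exact inv_mul_cancel₀ (norm_ne_zero_iff.mpr hq0ne)
  -- multiplication by negative powers of z stays in M, and lands in M₁ for powers ≤ -1
  have hmemM : ∀ (n : ℕ) (f : L2), f ∈ M → (eU (-(n : ℤ))).mulL f ∈ M := by
    intro n
    induction n with
    | zero =>
      intro f hf
      have h0 : (-((0:ℕ) : ℤ)) = (0 : ℤ) := by norm_num
      rw [h0, eU_mulL_zero]
      exact hf
    | succ k ih =>
      intro f hf
      have hidx : (-1 : ℤ) + (-(k : ℤ)) = -((k+1 : ℕ) : ℤ) := by push_cast; ring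
      have h1 : (eU (-((k+1 : ℕ) : ℤ))).mulL f = (eU (-1)).mulL ((eU (-(k : ℤ))).mulL f) := by
        rw [eU_mulL_mulL, hidx]
      rw [h1]
      exact hinv _ (ih f hf) _ ((eU (-1)).coe_mulL _)
  have hmemM₁ : ∀ (n : ℕ), 1 ≤ n → ∀ f ∈ M, (eU (-(n : ℤ))).mulL f ∈ M₁ := by
    intro n hn f hf
    obtain ⟨k, rfl⟩ : ∃ k : ℕ, n = k + 1 := ⟨n - 1, by omega⟩
    refine Submodule.mem_map.mpr ⟨(eU (-(k : ℤ))).mulL f, hmemM k f hf, ?_⟩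
    have hidx : (-1 : ℤ) + (-(k : ℤ)) = -((k+1 : ℕ) : ℤ) := by push_cast; ring
    show (eU (-1)).mulL ((eU (-(k : ℤ))).mulL f) = _
    rw [eU_mulL_mulL, hidx]
  -- orthogonality relations
  have horth : ∀ u ∈ M₁, ⟪u, qel⟫ = 0 := fun u hu =>
    (Submodule.mem_orthogonal M₁ qel).mp hqelperp u hu
  have horth' : ∀ u ∈ M₁, ⟪qel, u⟫ = 0 := fun u hu =>
    (Submodule.mem_orthogonal' M₁ qel).mp hqelperp u hu
  -- the modulus-squared function of qel
  set w : UC → ℂ := fun x => conj ((⇑qel) x) * (⇑qel) x with hw_def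
  have hw_int : Integrable w μc := by
    have h1 := MeasureTheory.L2.integrable_inner (𝕜 := ℂ) qel qel
    simpa [RCLike.inner_apply, hw_def, Complex.conj_mul'] using h1
  have hpos : ∀ m : ℕ, 1 ≤ m → fourierCoeff w ((m : ℕ) : ℤ) = 0 := by
    intro m hm
    have h2 := inner_eU_mulL_right (-(m : ℤ)) qel qel
    rw [neg_neg] at h2
    rw [hw_def, ← h2]
    exact horth' _ (hmemM₁ m hm qel hqelM)
  have hcoeffw : ∀ n : ℤ, fourierCoeff w n = (if n = 0 then 1 else 0) := by
    intro n
    rcases lt_trichotomy n 0 with hn | hn | hn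
    · rw [if_neg (by omega)]
      have h2 := inner_eU_mulL_left n qel qel
      rw [hw_def, ← h2]
      have hmem : (eU n).mulL qel ∈ M₁ := by
        have hidx : -(((-n).toNat : ℕ) : ℤ) = n := by omega
        rw [← hidx]
        exact hmemM₁ (-n).toNat (by omega) qel hqelM
      exact horth _ hmem
    · rw [hn, if_pos rfl]
      have h2 := inner_eU_mulL_left 0 qel qel
      rw [eU_mulL_zero] at h2
      rw [hw_def, ← h2, inner_self_eq_norm_sq_to_K, hqel_norm]
      norm_num
    · rw [if_neg (by omega)]
      have hidx : ((n.toNat : ℕ) : ℤ) = n := by omega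
      rw [← hidx]
      exact hpos n.toNat (by omega)
  -- qel is unimodular a.e.
  have hw1 : ∀ᵐ x ∂μc, w x = 1 := by
    have hvanish : ∀ n : ℤ, fourierCoeff (fun x => w x - 1) n = 0 := by
      intro n
      have hbnd : ∀ᵐ x ∂μc, ‖fourier (-n) x‖ ≤ 1 :=
        ae_of_all _ fun x => le_of_eq (by simp [fourier_apply, Circle.norm_coe])
      have hint1 : Integrable (fun x => fourier (-n) x • w x) μc := by
        simp_rw [smul_eq_mul]
        exact hw_int.bdd_mul (map_continuous (fourier (-n))).aestronglyMeasurable hbnd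
      have hint2 : Integrable (fun x => fourier (-n) x • (1 : ℂ)) μc := by
        simp_rw [smul_eq_mul]
        exact (integrable_const (1:ℂ)).bdd_mul
          (map_continuous (fourier (-n))).aestronglyMeasurable hbnd
      have hsub : fourierCoeff (fun x => w x - 1) n
          = fourierCoeff w n - fourierCoeff (fun _ : UC => (1 : ℂ)) n := by
        simp only [fourierCoeff]
        rw [← integral_sub hint1 hint2]
        apply integral_congr_ae
        exact ae_of_all _ fun x => by simp only [smul_sub]
      rw [hsub, hcoeffw n, fourierCoeff_one n]
      simp
    have h0 := ae_zero_of_fourierCoeff_zero (hw_int.sub (integrable_const 1)) hvanish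
    filter_upwards [h0] with x hx
    have h1 : w x - 1 = 0 := hx
    rwa [sub_eq_zero] at h1
  have hq_unim : ∀ᵐ x ∂μc, ‖(⇑qel) x‖ = 1 := by
    filter_upwards [hw1] with x hx
    rw [hw_def] at hx
    have h1 : ((Complex.normSq ((⇑qel) x) : ℝ) : ℂ) = 1 := by
      rw [← Complex.mul_conj ((⇑qel) x), mul_comm]
      exact hx
    have h2 : Complex.normSq ((⇑qel) x) = 1 := by exact_mod_cast h1
    rw [Complex.normSq_eq_norm_sq] at h2
    rw [← Real.sqrt_sq (norm_nonneg _), h2, Real.sqrt_one]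
  -- the unimodular multiplier and the subspace qH₂⁻
  set Q : Unim := ⟨⇑qel, Lp.aestronglyMeasurable qel, hq_unim⟩ with hQ
  set P : Submodule ℂ L2 := H2negSub.map (Q.iso.toLinearEquiv.toLinearMap) with hP
  have hPclosed : IsClosed (P : Set L2) := by
    have h1 : (P : Set L2) = ⇑(Q.iso) '' (H2negSub : Set L2) := by
      rw [hP, Submodule.map_coe]; rfl
    rw [h1]
    exact (Q.iso.toHomeomorph.isClosed_image).mpr isClosed_H2negSub
  have hQfourier : ∀ k : ℤ, Q.iso ((fourierLp 2 k : L2)) = (eU k).mulL qel := by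
    intro k
    rw [Unim.iso_apply]
    apply Lp.ext
    filter_upwards [Q.coe_mulL (fourierLp 2 k), (eU k).coe_mulL qel,
      coeFn_fourierLp (T := 2 * Real.pi) 2 k] with x h1 h2 h3
    rw [h1, h2, h3]
    exact mul_comm _ _
  -- P ⊆ M
  have hPM : P ≤ M := by
    intro u hu
    obtain ⟨h, hh, rfl⟩ := Submodule.mem_map.mp hu
    set S : Set L2 := Set.range (fun k : ℕ => (fourierLp (T := 2 * Real.pi) 2 (-(k:ℤ)) : L2))
      with hS
    have hclos : (h : L2) ∈ closure ((Submodule.span ℂ S : Submodule ℂ L2) : Set L2) := by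
      have hsum := hasSum_fourier_series_L2 h
      refine mem_closure_of_tendsto hsum (Filter.Eventually.of_forall fun s => ?_)
      rw [SetLike.mem_coe]
      refine Submodule.sum_mem _ fun i _ => ?_
      by_cases hip : 0 < i
      · rw [mem_H2negSub.mp hh i hip, zero_smul]
        exact zero_mem _
      · push_neg at hip
        refine Submodule.smul_mem _ _ (Submodule.subset_span ?_)
        rw [hS]
        refine ⟨(-i).toNat, ?_⟩
        have hidx : -(((-i).toNat : ℕ) : ℤ) = i := by omega
        show (fourierLp (T := 2 * Real.pi) 2 (-(((-i).toNat : ℕ) : ℤ)) : L2) = _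
        rw [hidx]
    have himg : Q.iso h ∈ closure (⇑(Q.iso) '' ((Submodule.span ℂ S : Submodule ℂ L2) : Set L2)) :=
      image_closure_subset_closure_image Q.iso.continuous ⟨h, hclos, rfl⟩
    have hsub : ⇑(Q.iso) '' ((Submodule.span ℂ S : Submodule ℂ L2) : Set L2) ⊆ (M : Set L2) := by
      rintro _ ⟨v, hv, rfl⟩
      rw [SetLike.mem_coe] at hv ⊢
      induction hv using Submodule.span_induction with
      | mem v hv =>
        obtain ⟨k, rfl⟩ := hv
        rw [hQfourier]
        exact hmemM k qel hqelM
      | zero => rw [map_zero]; exact zero_mem _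
      | add a b _ _ ha hb => rw [map_add]; exact add_mem ha hb
      | smul c a _ ha => rw [LinearIsometryEquiv.map_smul]; exact Submodule.smul_mem _ _ ha
    exact (IsClosed.closure_subset_iff hclosed).mpr hsub himg
  -- M ⊆ P
  have hMP : M ≤ P := by
    intro f hf
    haveI : CompleteSpace P := hPclosed.completeSpace_coe
    have hgM : f - (P.orthogonalProjectionOnto f : L2) ∈ M :=
      M.sub_mem hf (hPM (P.orthogonalProjectionOnto f).2)
    have hgperp : f - (P.orthogonalProjectionOnto f : L2) ∈ Pᗮ :=
      P.sub_starProjection_mem_orthogonal f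
    set g : L2 := f - (P.orthogonalProjectionOnto f : L2) with hg_def
    have hgzero : g = 0 := by
      have hvL : Q.conj'.mulL g = 0 := by
        apply L2_eq_zero_of_fourierCoeff
        intro n
        have hcoe : fourierCoeff (⇑(Q.conj'.mulL g)) n
            = fourierCoeff (fun x => conj ((⇑qel) x) * (⇑g) x) n :=
          fourierCoeff_congr_ae' (Q.conj'.coe_mulL g) n
        rw [hcoe]
        rcases le_or_gt n 0 with hn | hn
        · rw [← inner_eU_mulL_left n qel g]
          refine (Submodule.mem_orthogonal P g).mp hgperp _ ?_
          exact Submodule.mem_map.mpr ⟨fourierLp 2 n, fourierLp_mem_H2negSub hn, hQfourier n⟩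
        · have h2 := inner_eU_mulL_right (-n) qel g
          rw [neg_neg] at h2
          rw [← h2]
          have hmem : (eU (-n)).mulL g ∈ M₁ := by
            have hidx : ((n.toNat : ℕ) : ℤ) = n := by omega
            rw [← hidx]
            exact hmemM₁ n.toNat (by omega) g hgM
          exact horth' _ hmem
      have h3 := Q.mulL_mulL_conj' g
      rw [hvL] at h3
      rw [← h3]
      exact map_zero Q.lm
    have hfp : f = (P.orthogonalProjectionOnto f : L2) := by
      rw [hg_def, sub_eq_zero] at hgzero
      exact hgzero
    rw [hfp]
    exact (P.orthogonalProjectionOnto f).2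
  -- conclusion
  have hMPeq : M = P := le_antisymm hMP hPM
  refine ⟨⇑qel, ⟨Lp.aestronglyMeasurable qel, hq_unim⟩, ?_⟩
  rw [hMPeq]
  ext u
  constructor
  · intro hu
    obtain ⟨h, hh, rfl⟩ := Submodule.mem_map.mp hu
    exact ⟨h, mem_H2negSub.mp hh, Q.coe_mulL h⟩
  · rintro ⟨h, hh, hu⟩
    rw [SetLike.mem_coe]
    refine Submodule.mem_map.mpr ⟨h, mem_H2negSub.mpr hh, ?_⟩
    exact Lp.ext ((Q.coe_mulL h).trans hu.symm)
end
end

section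
/- Let g ∈ H² be the function with Fourier coefficients ĝ(n) = 1/(n+1) for n ≥ 0 and ĝ(n) = 0 for n < 0. Then the closed linear span in L² of the set {z^{-k}·g : k ≥ 1} ∪ {z^{-k} : k ≥ 1} (where z^{-k} also denotes the constant-filter translate e^{-ikθ}) equals all of L². In particular, the stochastic process (x_k, y_k) with x_k = Σ_{ℓ≥0} w_{k-ℓ}/(1+ℓ) and y_k = w_k driven by white noise is completely deterministic in the backward time-direction. -/
open MeasureTheory Complex Real Filter ComplexConjugate

noncomputable section

namespace Stmt14Aux

open Set

lemma amgm {x y ε : ℝ} (hε : 0 < ε) : x * y ≤ x ^ 2 / (2 * ε) + ε * y ^ 2 / 2 := by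
  have h : x ^ 2 / (2 * ε) + ε * y ^ 2 / 2 - x * y = (x - ε * y) ^ 2 / (2 * ε) := by
    field_simp
    ring
  nlinarith [div_nonneg (sq_nonneg (x - ε * y)) (by positivity : (0:ℝ) ≤ 2 * ε)]

lemma pow_sq_comm (t : ℝ) (n : ℕ) : (t ^ n) ^ 2 = (t ^ 2) ^ n := by
  rw [← pow_mul, ← pow_mul, mul_comm]

lemma sum_bound {a : ℕ → ℂ} (ha : Summable fun n => ‖a n‖ ^ 2) {t : ℝ} (h0 : 0 ≤ t)
    (h1 : t < 1) :
    Summable (fun n => ‖a n‖ * t ^ n) ∧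
      ∑' n, ‖a n‖ * t ^ n ≤ ((∑' n, ‖a n‖ ^ 2) + 1) / (2 * Real.sqrt (1 - t ^ 2)) := by
  have ht2 : t ^ 2 < 1 := by nlinarith
  have ht2' : (0:ℝ) ≤ t ^ 2 := sq_nonneg t
  set ε := Real.sqrt (1 - t ^ 2) with hεdef
  have hε : 0 < ε := Real.sqrt_pos.2 (by linarith)
  have hε2 : ε ^ 2 = 1 - t ^ 2 := Real.sq_sqrt (by linarith)
  have hgeo : Summable (fun n : ℕ => (t ^ 2) ^ n) := summable_geometric_of_lt_one ht2' ht2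
  have hrhs : Summable (fun n => ‖a n‖ ^ 2 / (2 * ε) + ε * (t ^ 2) ^ n / 2) :=
    (ha.div_const _).add ((hgeo.mul_left ε).div_const _)
  have hbound : ∀ n, ‖a n‖ * t ^ n ≤ ‖a n‖ ^ 2 / (2 * ε) + ε * (t ^ 2) ^ n / 2 := by
    intro n
    have h := amgm (x := ‖a n‖) (y := t ^ n) hε
    rwa [pow_sq_comm] at h
  have hs : Summable fun n => ‖a n‖ * t ^ n :=
    hrhs.of_nonneg_of_le (fun n => mul_nonneg (norm_nonneg _) (pow_nonneg h0 n)) hbound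
  refine ⟨hs, ?_⟩
  have hle := Summable.tsum_le_tsum hbound hs hrhs
  rw [Summable.tsum_add (ha.div_const _) ((hgeo.mul_left ε).div_const _), tsum_div_const,
    tsum_div_const, tsum_mul_left, tsum_geometric_of_lt_one ht2' ht2] at hle
  have he : ε * (1 - t ^ 2)⁻¹ / 2 = 1 / (2 * ε) := by
    rw [← hε2]
    field_simp
  rw [he] at hle
  calc ∑' n, ‖a n‖ * t ^ n ≤ (∑' n, ‖a n‖ ^ 2) / (2 * ε) + 1 / (2 * ε) := hle
  _ = ((∑' n, ‖a n‖ ^ 2) + 1) / (2 * ε) := by ring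

lemma norm_term (a : ℕ → ℂ) {t : ℝ} (h0 : 0 ≤ t) (n : ℕ) :
    ‖a n * (t : ℂ) ^ n‖ = ‖a n‖ * t ^ n := by
  rw [norm_mul, norm_pow, Complex.norm_real, Real.norm_eq_abs, _root_.abs_of_nonneg h0]

lemma summable_term {a : ℕ → ℂ} (ha : Summable fun n => ‖a n‖ ^ 2) {t : ℝ} (h0 : 0 ≤ t)
    (h1 : t < 1) : Summable fun n => a n * (t : ℂ) ^ n := by
  apply Summable.of_norm
  have := (sum_bound ha h0 h1).1
  exact this.congr fun n => (norm_term a h0 n).symm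

lemma norm_tsum_le {a : ℕ → ℂ} (ha : Summable fun n => ‖a n‖ ^ 2) {t : ℝ} (h0 : 0 ≤ t)
    (h1 : t < 1) :
    ‖∑' n, a n * (t : ℂ) ^ n‖ ≤ ((∑' n, ‖a n‖ ^ 2) + 1) / (2 * Real.sqrt (1 - t ^ 2)) := by
  have hsn : Summable fun n => ‖a n * (t : ℂ) ^ n‖ :=
    ((sum_bound ha h0 h1).1).congr fun n => (norm_term a h0 n).symm
  calc ‖∑' n, a n * (t : ℂ) ^ n‖ ≤ ∑' n, ‖a n * (t : ℂ) ^ n‖ := norm_tsum_le_tsum_norm hsn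
  _ = ∑' n, ‖a n‖ * t ^ n := tsum_congr fun n => norm_term a h0 n
  _ ≤ _ := (sum_bound ha h0 h1).2

lemma measG {a : ℕ → ℂ} (ha : Summable fun n => ‖a n‖ ^ 2) :
    AEStronglyMeasurable (fun t : ℝ => ∑' n, a n * (t : ℂ) ^ n)
      (volume.restrict (Ioo (0:ℝ) 1)) := by
  apply aestronglyMeasurable_of_tendsto_ae (u := atTop)
    (f := fun N (t : ℝ) => ∑ n ∈ Finset.range N, a n * (t : ℂ) ^ n)
  · intro N
    exact (continuous_finset_sum _ fun n _ =>
      (continuous_const.mul (Complex.continuous_ofReal.pow n))).aestronglyMeasurable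
  · rw [ae_restrict_iff' measurableSet_Ioo]
    refine Eventually.of_forall fun t ht => ?_
    exact (summable_term ha ht.1.le ht.2).hasSum.tendsto_sum_nat

lemma integrable_inv_sqrt_one_sub :
    IntegrableOn (fun t : ℝ => (Real.sqrt (1 - t))⁻¹) (Ioo (0:ℝ) 1) := by
  have h1 : IntervalIntegrable (fun x : ℝ => x ^ (-(1/2) : ℝ)) volume 0 1 :=
    intervalIntegral.intervalIntegrable_rpow' (by norm_num)
  have h2 := (h1.comp_sub_left 1).symm
  norm_num at h2
  have h3 : IntegrableOn (fun x : ℝ => (1 - x) ^ (-(1/2) : ℝ)) (Ioc (0:ℝ) 1) := by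
    rw [← intervalIntegrable_iff_integrableOn_Ioc_of_le (by norm_num : (0:ℝ) ≤ 1)]
    exact h2
  apply (h3.mono_set Ioo_subset_Ioc_self).congr_fun ?_ measurableSet_Ioo
  intro x hx
  dsimp only
  rw [Real.rpow_neg (by linarith [hx.2] : (0:ℝ) ≤ 1 - x), Real.sqrt_eq_rpow]

lemma integrable_G {a : ℕ → ℂ} (ha : Summable fun n => ‖a n‖ ^ 2) :
    IntegrableOn (fun t : ℝ => ∑' n, a n * (t : ℂ) ^ n) (Ioo (0:ℝ) 1) := by
  set A := ∑' n, ‖a n‖ ^ 2 with hA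
  have hA0 : 0 ≤ A := tsum_nonneg fun n => sq_nonneg _
  apply Integrable.mono' (g := fun t => ((A + 1) / 2) * (Real.sqrt (1 - t))⁻¹)
    (integrable_inv_sqrt_one_sub.const_mul _) (measG ha)
  rw [ae_restrict_iff' measurableSet_Ioo]
  refine Eventually.of_forall fun t ht => ?_
  have h0 : 0 ≤ t := ht.1.le
  have h1 : t < 1 := ht.2
  have hsq : Real.sqrt (1 - t) ≤ Real.sqrt (1 - t ^ 2) := Real.sqrt_le_sqrt (by nlinarith)
  have hsq0 : 0 < Real.sqrt (1 - t) := Real.sqrt_pos.2 (by linarith)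
  calc ‖∑' n, a n * (t : ℂ) ^ n‖ ≤ (A + 1) / (2 * Real.sqrt (1 - t ^ 2)) :=
    norm_tsum_le ha h0 h1
  _ ≤ (A + 1) / (2 * Real.sqrt (1 - t)) := by gcongr
  _ = ((A + 1) / 2) * (Real.sqrt (1 - t))⁻¹ := by
    rw [div_mul_eq_div_div, div_eq_mul_inv]

lemma integral_pow_Ioo (m : ℕ) : ∫ t in Ioo (0:ℝ) 1, t ^ m = ((m : ℝ) + 1)⁻¹ := by
  rw [← integral_Ioc_eq_integral_Ioo, ← intervalIntegral.integral_of_le zero_le_one,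
    integral_pow]
  norm_num

lemma integral_cpow_Ioo (m : ℕ) :
    ∫ t in Ioo (0:ℝ) 1, ((t : ℂ)) ^ m = ((((m : ℝ) + 1)⁻¹ : ℝ) : ℂ) := by
  have : ∀ t : ℝ, ((t : ℂ)) ^ m = ((t ^ m : ℝ) : ℂ) := fun t => by push_cast; ring
  have h2 : ∫ t in Ioo (0:ℝ) 1, ((t ^ m : ℝ) : ℂ) = ((∫ t in Ioo (0:ℝ) 1, t ^ m : ℝ) : ℂ) :=
    integral_ofReal
  simp_rw [this]
  rw [h2, integral_pow_Ioo]

lemma summable_shift_inv_sq : Summable (fun n : ℕ => (((n : ℝ) + 1)⁻¹) ^ 2) := by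
  have h := Real.summable_one_div_nat_pow.mpr (by norm_num : 1 < 2)
  have h2 := (summable_nat_add_iff 1).2 h
  exact h2.congr fun n => by push_cast; rw [one_div, inv_pow]

lemma summable_norm_div {a : ℕ → ℂ} (ha : Summable fun n => ‖a n‖ ^ 2) (k : ℕ) :
    Summable (fun n : ℕ => ‖a n‖ * ((n : ℝ) + k + 1)⁻¹) := by
  refine Summable.of_nonneg_of_le
    (fun n => by positivity) (fun n => ?_) ((ha.div_const 2).add (summable_shift_inv_sq.div_const 2))
  have h1 : ((n : ℝ) + k + 1)⁻¹ ≤ ((n : ℝ) + 1)⁻¹ := by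
    apply inv_anti₀ (by positivity)
    have : (0:ℝ) ≤ (k : ℝ) := Nat.cast_nonneg k
    linarith
  calc ‖a n‖ * ((n : ℝ) + k + 1)⁻¹ ≤ ‖a n‖ * ((n : ℝ) + 1)⁻¹ :=
        mul_le_mul_of_nonneg_left h1 (norm_nonneg _)
  _ ≤ ‖a n‖ ^ 2 / (2 * 1) + 1 * (((n : ℝ) + 1)⁻¹) ^ 2 / 2 := amgm one_pos
  _ = ‖a n‖ ^ 2 / 2 + (((n : ℝ) + 1)⁻¹) ^ 2 / 2 := by ring

lemma integral_tk_G {a : ℕ → ℂ} (ha : Summable fun n => ‖a n‖ ^ 2) (k : ℕ) :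
    ∫ t in Ioo (0:ℝ) 1, (t : ℂ) ^ k * ∑' n, a n * (t : ℂ) ^ n
      = ∑' n : ℕ, a n * (((((n : ℝ) + k + 1)⁻¹ : ℝ)) : ℂ) := by
  have hcongr : ∀ t ∈ Ioo (0:ℝ) 1,
      (t : ℂ) ^ k * ∑' n, a n * (t : ℂ) ^ n = ∑' n, a n * (t : ℂ) ^ (n + k) := by
    intro t ht
    rw [← tsum_mul_left]
    exact tsum_congr fun n => by ring
  rw [setIntegral_congr_fun measurableSet_Ioo hcongr]
  have hint : ∀ n : ℕ, Integrable (fun t : ℝ => a n * (t : ℂ) ^ (n + k))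
      (volume.restrict (Ioo (0:ℝ) 1)) := by
    intro n
    have hc : Continuous (fun t : ℝ => a n * (t : ℂ) ^ (n + k)) :=
      continuous_const.mul (Complex.continuous_ofReal.pow _)
    have := hc.intervalIntegrable (μ := volume) (0:ℝ) 1
    rw [intervalIntegrable_iff_integrableOn_Ioc_of_le (by norm_num : (0:ℝ) ≤ 1)] at this
    exact this.mono_set Ioo_subset_Ioc_self
  rw [← integral_tsum_of_summable_integral_norm hint ?_]
  · refine tsum_congr fun n => ?_
    rw [integral_const_mul, integral_cpow_Ioo]
    congr 1
    push_cast
    ring_nf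
  · apply Summable.congr (summable_norm_div ha k)
    intro n
    rw [show (fun t : ℝ => ‖a n * (t : ℂ) ^ (n + k)‖) = fun t : ℝ => ‖a n‖ * ‖(t:ℂ)‖ ^ (n+k)
        from funext fun t => by rw [norm_mul, norm_pow]]
    have : ∫ t in Ioo (0:ℝ) 1, ‖a n‖ * ‖(t:ℂ)‖ ^ (n+k)
        = ∫ t in Ioo (0:ℝ) 1, ‖a n‖ * t ^ (n+k) := by
      refine setIntegral_congr_fun measurableSet_Ioo fun t ht => ?_
      rw [Complex.norm_real, Real.norm_eq_abs, _root_.abs_of_nonneg ht.1.le]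
    rw [this, integral_const_mul, integral_pow_Ioo]
    push_cast
    ring_nf

end Stmt14Aux

namespace Part2

open Stmt14Aux Set

variable {a : ℕ → ℂ}

lemma integrable_phiH (ha : Summable fun n => ‖a n‖ ^ 2) (φ : ℝ → ℂ) (hφ : Continuous φ) :
    IntegrableOn (fun t : ℝ => φ t * ((t : ℂ) * ∑' n, a n * (t : ℂ) ^ n)) (Ioo (0:ℝ) 1) := by
  obtain ⟨C, hC⟩ : ∃ C : ℝ, ∀ t ∈ Icc (0:ℝ) 1, ‖φ t * (t : ℂ)‖ ≤ C := by
    obtain ⟨C, hC⟩ := (isCompact_Icc (a := (0:ℝ)) (b := 1)).exists_bound_of_continuousOn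
      ((hφ.mul Complex.continuous_ofReal).continuousOn)
    exact ⟨C, hC⟩
  refine Integrable.mono' (g := fun t : ℝ => C * ‖∑' n, a n * (t : ℂ) ^ n‖)
    ((integrable_G ha).norm.const_mul C) ?_ ?_
  · refine ((((hφ.mul Complex.continuous_ofReal).aestronglyMeasurable).mul (measG ha))).congr
      (Eventually.of_forall fun t => ?_)
    simp only [Pi.mul_apply]
    ring
  filter_upwards [ae_restrict_mem measurableSet_Ioo] with t ht
  have : φ t * ((t:ℂ) * ∑' n, a n * (t:ℂ)^n) = (φ t * (t:ℂ)) * ∑' n, a n * (t:ℂ)^n := by ring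
  rw [this, norm_mul]
  exact mul_le_mul_of_nonneg_right (hC t (Ioo_subset_Icc_self ht)) (norm_nonneg _)

lemma G_ae_zero (ha : Summable fun n => ‖a n‖ ^ 2)
    (hmom : ∀ k : ℕ, 1 ≤ k → ∫ t in Ioo (0:ℝ) 1, (t : ℂ) ^ k * ∑' n, a n * (t : ℂ) ^ n = 0) :
    ∀ᵐ t : ℝ ∂(volume.restrict (Ioo (0:ℝ) 1)), ∑' n, a n * (t : ℂ) ^ n = 0 := by
  set H : ℝ → ℂ := fun t : ℝ => (t : ℂ) * ∑' n, a n * (t : ℂ) ^ n with hHdef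
  have hHint : IntegrableOn H (Ioo (0:ℝ) 1) := by
    simpa using integrable_phiH ha (fun _ => 1) continuous_const
  have hpoly : ∀ p : Polynomial ℝ, ∫ t in Ioo (0:ℝ) 1, ((p.eval t : ℝ) : ℂ) * H t = 0 := by
    intro p
    induction p using Polynomial.induction_on' with
    | add p q hp hq =>
        have h1 := integrable_phiH ha (fun t : ℝ => ((p.eval t : ℝ) : ℂ))
          (Complex.continuous_ofReal.comp p.continuous)
        have h2 := integrable_phiH ha (fun t : ℝ => ((q.eval t : ℝ) : ℂ))
          (Complex.continuous_ofReal.comp q.continuous)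
        have : ∀ t ∈ Ioo (0:ℝ) 1, (((p + q).eval t : ℝ) : ℂ) * H t
            = ((p.eval t : ℝ) : ℂ) * H t + ((q.eval t : ℝ) : ℂ) * H t := by
          intro t _
          rw [Polynomial.eval_add]
          push_cast
          ring
        rw [setIntegral_congr_fun measurableSet_Ioo this, integral_add h1 h2, hp, hq, add_zero]
    | monomial n c =>
        have : ∀ t ∈ Ioo (0:ℝ) 1, (((Polynomial.monomial n c).eval t : ℝ) : ℂ) * H t
            = c * ((t : ℂ) ^ (n + 1) * ∑' m, a m * (t : ℂ) ^ m) := by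
          intro t _
          rw [Polynomial.eval_monomial, hHdef]
          push_cast
          ring
        rw [setIntegral_congr_fun measurableSet_Ioo this, integral_const_mul,
          hmom (n + 1) (Nat.le_add_left 1 n), mul_zero]
  have hsmooth : ∀ (gφ : ℝ → ℝ), ContDiff ℝ ((⊤ : ℕ∞) : WithTop ℕ∞) gφ → HasCompactSupport gφ →
      ∫ t, gφ t • H t ∂(volume.restrict (Ioo (0:ℝ) 1)) = 0 := by
    intro gφ hgc _
    have hcont : Continuous gφ := hgc.continuous
    set M := ∫ t in Ioo (0:ℝ) 1, ‖H t‖ with hMdef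
    have hM0 : 0 ≤ M := integral_nonneg fun t => norm_nonneg _
    have hgint : IntegrableOn (fun t : ℝ => (gφ t : ℂ) * H t) (Ioo (0:ℝ) 1) :=
      integrable_phiH ha _ (Complex.continuous_ofReal.comp hcont)
    have key : ∀ ε : ℝ, 0 < ε → ‖∫ t in Ioo (0:ℝ) 1, (gφ t : ℂ) * H t‖ ≤ ε * (M + 1) := by
      intro ε hε
      obtain ⟨p, hp⟩ := exists_polynomial_near_of_continuousOn 0 1 gφ hcont.continuousOn ε hε
      have hpint : IntegrableOn (fun t : ℝ => ((p.eval t : ℝ) : ℂ) * H t) (Ioo (0:ℝ) 1) :=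
        integrable_phiH ha _ (Complex.continuous_ofReal.comp p.continuous)
      have hdiff : IntegrableOn (fun t : ℝ => ((gφ t : ℂ) - ((p.eval t : ℝ) : ℂ)) * H t)
          (Ioo (0:ℝ) 1) :=
        integrable_phiH ha _
          ((Complex.continuous_ofReal.comp hcont).sub (Complex.continuous_ofReal.comp p.continuous))
      have hsplit : ∫ t in Ioo (0:ℝ) 1, (gφ t : ℂ) * H t
          = ∫ t in Ioo (0:ℝ) 1, ((gφ t : ℂ) - ((p.eval t : ℝ) : ℂ)) * H t := by
        rw [← sub_zero (∫ t in Ioo (0:ℝ) 1, (gφ t : ℂ) * H t), ← hpoly p, ← integral_sub hgint hpint]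
        refine setIntegral_congr_fun measurableSet_Ioo fun t _ => ?_
        ring
      rw [hsplit]
      calc ‖∫ t in Ioo (0:ℝ) 1, ((gφ t : ℂ) - ((p.eval t : ℝ) : ℂ)) * H t‖
          ≤ ∫ t in Ioo (0:ℝ) 1, ‖((gφ t : ℂ) - ((p.eval t : ℝ) : ℂ)) * H t‖ :=
            norm_integral_le_integral_norm _
      _ ≤ ∫ t in Ioo (0:ℝ) 1, ε * ‖H t‖ := by
          apply integral_mono_ae hdiff.norm (hHint.norm.const_mul ε)
          · filter_upwards [ae_restrict_mem measurableSet_Ioo] with t ht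
            rw [norm_mul]
            apply mul_le_mul_of_nonneg_right _ (norm_nonneg _)
            have : ((gφ t : ℂ) - ((p.eval t : ℝ) : ℂ)) = ((gφ t - p.eval t : ℝ) : ℂ) := by push_cast; ring
            rw [this, Complex.norm_real, Real.norm_eq_abs, abs_sub_comm]
            exact (hp t (Ioo_subset_Icc_self ht)).le
      _ = ε * M := by rw [integral_const_mul]
      _ ≤ ε * (M + 1) := by nlinarith
    have hnorm : ‖∫ t in Ioo (0:ℝ) 1, (gφ t : ℂ) * H t‖ ≤ 0 := by
      apply le_of_forall_pos_le_add
      intro ε hε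
      have h := key (ε / (M + 1)) (by positivity)
      rw [div_mul_cancel₀ _ (by positivity : M + 1 ≠ 0)] at h
      linarith
    have : ∫ t in Ioo (0:ℝ) 1, (gφ t : ℂ) * H t = 0 :=
      norm_le_zero_iff.1 hnorm
    rw [← this]
    refine integral_congr_ae (Eventually.of_forall fun t => ?_)
    simp [Complex.real_smul]
  have hH0 : ∀ᵐ t ∂(volume.restrict (Ioo (0:ℝ) 1)), H t = 0 :=
    ae_eq_zero_of_integral_contDiff_smul_eq_zero hHint.locallyIntegrable hsmooth
  filter_upwards [hH0, ae_restrict_mem measurableSet_Ioo] with t h1 h2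
  rcases mul_eq_zero.1 h1 with h | h
  · exact absurd (Complex.ofReal_eq_zero.1 h) (ne_of_gt h2.1)
  · exact h

end Part2

namespace Part3

open Stmt14Aux Set

lemma tsum_sq_shift_le {a : ℕ → ℂ} (ha : Summable fun n => ‖a n‖ ^ 2) :
    ∑' n, ‖a (n + 1)‖ ^ 2 ≤ ∑' n, ‖a n‖ ^ 2 := by
  have h := Summable.tsum_eq_zero_add ha
  have := sq_nonneg ‖a 0‖
  linarith

lemma head_zero {a : ℕ → ℂ} (ha : Summable fun n => ‖a n‖ ^ 2)
    (hae : ∀ᵐ t : ℝ ∂(volume.restrict (Ioo (0:ℝ) 1)), ∑' n, a n * (t : ℂ) ^ n = 0) :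
    a 0 = 0 := by
  set A := ∑' n, ‖a n‖ ^ 2 with hA
  have hA0 : 0 ≤ A := tsum_nonneg fun n => sq_nonneg _
  have ha' : Summable fun n => ‖a (n + 1)‖ ^ 2 := (summable_nat_add_iff (f := fun n => ‖a n‖ ^ 2) 1).2 ha
  have hA' : ∑' n, ‖a (n + 1)‖ ^ 2 ≤ A := tsum_sq_shift_le ha
  -- for every small δ there is t ∈ (0, δ) with vanishing sum
  have hex : ∀ δ : ℝ, 0 < δ → δ ≤ 1/2 → ∃ t : ℝ, t ∈ Ioo 0 δ ∧ ∑' n, a n * (t : ℂ) ^ n = 0 := by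
    intro δ hδ hδ2
    by_contra hcon
    push_neg at hcon
    have hsub : Ioo (0:ℝ) δ ⊆ {t : ℝ | ¬ (∑' n, a n * (t : ℂ) ^ n = 0)} := by
      intro t ht
      exact hcon t ht
    have hnull : (volume.restrict (Ioo (0:ℝ) 1)) {t : ℝ | ¬ (∑' n, a n * (t : ℂ) ^ n = 0)} = 0 :=
      hae
    have hle := measure_mono_null hsub hnull
    rw [Measure.restrict_apply' measurableSet_Ioo] at hle
    have : Ioo (0:ℝ) δ ∩ Ioo (0:ℝ) 1 = Ioo (0:ℝ) δ := by
      apply inter_eq_self_of_subset_left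
      exact Ioo_subset_Ioo le_rfl (by linarith)
    rw [this, Real.volume_Ioo] at hle
    simp only [sub_zero] at hle
    exact absurd hle (by simp [ENNReal.ofReal_eq_zero]; linarith)
  have key : ∀ δ : ℝ, 0 < δ → δ ≤ 1/2 → ‖a 0‖ ≤ δ * (A + 1) := by
    intro δ hδ hδ2
    obtain ⟨t, ht, hzero⟩ := hex δ hδ hδ2
    have h0 : 0 ≤ t := ht.1.le
    have h1 : t < 1 := by linarith [ht.2]
    have hsum : Summable fun n => a n * (t : ℂ) ^ n := summable_term ha h0 h1
    have hsplit := Summable.tsum_eq_zero_add hsum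
    rw [hzero] at hsplit
    have hfact : ∑' n, a (n + 1) * (t : ℂ) ^ (n + 1) = (t : ℂ) * ∑' n, a (n + 1) * (t : ℂ) ^ n := by
      rw [← tsum_mul_left]
      exact tsum_congr fun n => by ring
    rw [pow_zero, mul_one, hfact] at hsplit
    have ha0 : a 0 = -((t : ℂ) * ∑' n, a (n + 1) * (t : ℂ) ^ n) :=
      eq_neg_of_add_eq_zero_left hsplit.symm
    rw [ha0, norm_neg, norm_mul, Complex.norm_real, Real.norm_eq_abs, _root_.abs_of_nonneg h0]
    have hb := norm_tsum_le ha' h0 h1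
    have hsqrt : (1:ℝ)/2 ≤ Real.sqrt (1 - t ^ 2) := by
      have h14 : (1:ℝ)/4 ≤ 1 - t ^ 2 := by nlinarith [ht.2]
      have h2 := Real.sqrt_le_sqrt h14
      rwa [show Real.sqrt ((1:ℝ)/4) = 1/2 by
        rw [show (1:ℝ)/4 = (1/2)^2 by norm_num, Real.sqrt_sq (by norm_num : (0:ℝ) ≤ 1/2)]] at h2
    have hb2 : ‖∑' n, a (n + 1) * (t : ℂ) ^ n‖ ≤ A + 1 := by
      refine hb.trans ?_
      have hpos : (0:ℝ) < 2 * Real.sqrt (1 - t ^ 2) := by linarith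
      calc ((∑' n, ‖a (n+1)‖ ^ 2) + 1) / (2 * Real.sqrt (1 - t ^ 2))
          ≤ (A + 1) / 1 := by gcongr <;> linarith
      _ = A + 1 := div_one _
    calc t * ‖∑' n, a (n + 1) * (t : ℂ) ^ n‖ ≤ t * (A + 1) :=
          mul_le_mul_of_nonneg_left hb2 h0
    _ ≤ δ * (A + 1) := by nlinarith [ht.2]
  have hnorm : ‖a 0‖ ≤ 0 := by
    apply le_of_forall_pos_le_add
    intro ε hε
    rcases le_or_gt ε (1/2 * (A+1)) with h | h
    · have hδ : 0 < ε / (A + 1) := by positivity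
      have hδ2 : ε / (A + 1) ≤ 1/2 := by
        rw [div_le_iff₀ (by linarith)]
        linarith
      have := key (ε / (A + 1)) hδ hδ2
      rw [div_mul_cancel₀ _ (by linarith : A + 1 ≠ 0)] at this
      linarith
    · have := key (1/2) (by norm_num) le_rfl
      linarith
  simpa using norm_le_zero_iff.1 hnorm

lemma coeffs_zero : ∀ (N : ℕ) (a : ℕ → ℂ), (Summable fun n => ‖a n‖ ^ 2) →
    (∀ᵐ t : ℝ ∂(volume.restrict (Ioo (0:ℝ) 1)), ∑' n, a n * (t : ℂ) ^ n = 0) → a N = 0 := by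
  intro N
  induction N with
  | zero => exact fun a ha hae => head_zero ha hae
  | succ N ih =>
      intro a ha hae
      have h0 : a 0 = 0 := head_zero ha hae
      have ha' : Summable fun n => ‖a (n + 1)‖ ^ 2 := (summable_nat_add_iff (f := fun n => ‖a n‖ ^ 2) 1).2 ha
      have hae' : ∀ᵐ t : ℝ ∂(volume.restrict (Ioo (0:ℝ) 1)),
          ∑' n, a (n + 1) * (t : ℂ) ^ n = 0 := by
        filter_upwards [hae, ae_restrict_mem measurableSet_Ioo] with t h1 h2
        have hsum : Summable fun n => a n * (t : ℂ) ^ n := summable_term ha h2.1.le h2.2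
        have hsplit := Summable.tsum_eq_zero_add hsum
        rw [h1, h0] at hsplit
        have hfact : ∑' n, a (n + 1) * (t : ℂ) ^ (n + 1)
            = (t : ℂ) * ∑' n, a (n + 1) * (t : ℂ) ^ n := by
          rw [← tsum_mul_left]
          exact tsum_congr fun n => by ring
        have h3 : (t : ℂ) * ∑' n, a (n + 1) * (t : ℂ) ^ n = 0 := by
          rw [← hfact]
          simpa using hsplit.symm
        rcases mul_eq_zero.1 h3 with h | h
        · exact absurd (Complex.ofReal_eq_zero.1 h) (ne_of_gt h2.1)
        · exact h
      exact ih (fun n => a (n + 1)) ha' hae'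

end Part3



/-- For `g ∈ H²` with Fourier coefficients `ĝ(n) = 1/(n+1)`, `n ≥ 0`, the closed span of
`{z⁻ᵏ g : k ≥ 1} ∪ {z⁻ᵏ : k ≥ 1}` is all of L²: the associated process is completely
deterministic in the backward time-direction. -/
theorem stmt14 (g : UC → ℂ) (hm : MemLp g 2 μc)
    (hpos : ∀ n : ℤ, 0 ≤ n → fourierCoeff g n = 1 / ((n : ℂ) + 1))
    (hneg : ∀ n : ℤ, n < 0 → fourierCoeff g n = 0) :
    closure ((Submodule.span ℂ
      ({u : L2 | ∃ k : ℕ, 1 ≤ k ∧ ⇑u =ᵐ[μc] fun x => fourier (-(k : ℤ)) x * g x} ∪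
       {u : L2 | ∃ k : ℕ, 1 ≤ k ∧ ⇑u =ᵐ[μc] fun x => (fourier (-(k : ℤ)) x : ℂ)}) :
        Submodule ℂ L2) : Set L2) = Set.univ := by
  classical
  set S : Set L2 :=
    ({u : L2 | ∃ k : ℕ, 1 ≤ k ∧ ⇑u =ᵐ[μc] fun x => fourier (-(k : ℤ)) x * g x} ∪
     {u : L2 | ∃ k : ℕ, 1 ≤ k ∧ ⇑u =ᵐ[μc] fun x => (fourier (-(k : ℤ)) x : ℂ)}) with hSdef
  have hbot : (Submodule.span ℂ S)ᗮ = ⊥ := by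
    rw [Submodule.eq_bot_iff]
    intro f hf
    have horth : ∀ u ∈ S, (inner ℂ u f : ℂ) = 0 := fun u hu =>
      (Submodule.mem_orthogonal _ f).1 hf u (Submodule.subset_span hu)
    have hfour_top : ∀ n : ℤ, MemLp (⇑(fourier n : C(UC, ℂ))) ⊤ μc := by
      intro n
      refine memLp_top_of_bound (fourier n).continuous.aestronglyMeasurable 1
        (Eventually.of_forall fun x => ?_)
      rw [fourier_apply, Circle.norm_coe]
    -- negative Fourier coefficients of f vanish
    have hfneg : ∀ i : ℤ, i < 0 → fourierCoeff (⇑f) i = 0 := by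
      intro i hi
      set k : ℕ := (-i).toNat with hk
      have hk1 : 1 ≤ k := by omega
      have hik : -(k : ℤ) = i := by omega
      have humem : fourierLp 2 (-(k : ℤ)) ∈ S := Or.inr ⟨k, hk1, coeFn_fourierLp 2 _⟩
      have h0 := horth _ humem
      have hbe : (fourierBasis (T := 2 * Real.pi)) (-(k : ℤ)) = fourierLp 2 (-(k : ℤ)) :=
        congrFun coe_fourierBasis _
      have hz : (fourierBasis (T := 2 * Real.pi)).repr f (-(k : ℤ)) = 0 := by
        rw [fourierBasis.repr_apply_apply, hbe]
        exact h0
      rw [fourierBasis_repr] at hz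
      rwa [hik] at hz
    -- Gg and its coefficients
    set Gg : L2 := hm.toLp g with hGg
    have hGcoeff : ∀ i : ℤ, fourierCoeff (⇑Gg) i = fourierCoeff g i := by
      intro i
      simp only [fourierCoeff]
      apply integral_congr_ae
      filter_upwards [hm.coeFn_toLp] with x hx
      rw [hx]
    -- moment identities over ℤ
    have hmomZ : ∀ k : ℕ, 1 ≤ k →
        ∑' i : ℤ, (starRingEnd ℂ) (fourierCoeff g i) * fourierCoeff (⇑f) (i - k) = 0 := by
      intro k hk
      have hψmem : MemLp (fun x : UC => fourier (k : ℤ) x * f x) 2 μc := by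
        have h2 : (fun x : UC => fourier (k : ℤ) x * f x)
            = (⇑f • ⇑(fourier (k : ℤ) : C(UC, ℂ)) : UC → ℂ) := by
          funext x
          simp [Pi.smul_apply, smul_eq_mul, mul_comm]
        rw [h2]
        exact MemLp.smul (r := 2) (hfour_top (k : ℤ)) (Lp.memLp f)
      set ψ : L2 := hψmem.toLp _ with hψ
      have hψcoeff : ∀ i : ℤ, fourierCoeff (⇑ψ) i = fourierCoeff (⇑f) (i - k) := by
        intro i
        have e1 : fourierCoeff (⇑ψ) i
            = ∫ x, fourier (-i) x • (fourier (k : ℤ) x * f x) ∂μc := by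
          simp only [fourierCoeff]
          apply integral_congr_ae
          filter_upwards [hψmem.coeFn_toLp] with x hx
          rw [hx]
        rw [e1]
        simp only [fourierCoeff, smul_eq_mul]
        apply integral_congr_ae (Eventually.of_forall fun x => ?_)
        rw [← mul_assoc, ← fourier_add]
        have : -i + k = -(i - k) := by ring
        rw [this]
      have humem2 : MemLp (fun x : UC => fourier (-(k : ℤ)) x * g x) 2 μc := by
        have h2 : (fun x : UC => fourier (-(k : ℤ)) x * g x)
            = (g • ⇑(fourier (-(k : ℤ)) : C(UC, ℂ)) : UC → ℂ) := by
          funext x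
          simp [Pi.smul_apply, smul_eq_mul, mul_comm]
        rw [h2]
        exact MemLp.smul (r := 2) (hfour_top _) hm
      have hu_in_S : humem2.toLp _ ∈ S := Or.inl ⟨k, hk, humem2.coeFn_toLp⟩
      have h0 : (inner ℂ (humem2.toLp _) f : ℂ) = 0 := horth _ hu_in_S
      have hinner : (inner ℂ Gg ψ : ℂ) = 0 := by
        rw [← h0, L2.inner_def, L2.inner_def]
        apply integral_congr_ae
        filter_upwards [hm.coeFn_toLp, hψmem.coeFn_toLp, humem2.coeFn_toLp] with x h1 h2 h3
        rw [RCLike.inner_apply, RCLike.inner_apply, h1, h2, h3, map_mul]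
        have hconj : (starRingEnd ℂ) (fourier (-(k : ℤ)) x) = fourier (k : ℤ) x := by
          rw [fourier_neg (n := (k : ℤ))]
          exact Complex.conj_conj _
        rw [hconj]
        ring
      have hpars := fourierBasis.tsum_inner_mul_inner Gg ψ
      rw [hinner] at hpars
      rw [← hpars]
      refine tsum_congr fun i => ?_
      have h1 : (inner ℂ (fourierBasis i) ψ : ℂ) = fourierCoeff (⇑f) (i - k) := by
        rw [← fourierBasis.repr_apply_apply, fourierBasis_repr, hψcoeff]
      have h2 : (inner ℂ Gg (fourierBasis i) : ℂ) = (starRingEnd ℂ) (fourierCoeff g i) := by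
        rw [← inner_conj_symm]
        congr 1
        rw [← fourierBasis.repr_apply_apply, fourierBasis_repr, hGcoeff]
      rw [h1, h2]
    -- square-summability of nonnegative coefficients
    have ha : Summable fun m : ℕ => ‖fourierCoeff (⇑f) (m : ℤ)‖ ^ 2 := by
      have h1 := (memℓp_gen_iff (p := (2 : ENNReal)) (by norm_num)).1
        (lp.memℓp (fourierBasis.repr f))
      have h2 : Summable fun i : ℤ => ‖fourierCoeff (⇑f) i‖ ^ 2 := by
        refine h1.congr fun i => ?_
        rw [fourierBasis_repr]
        norm_num
      exact h2.comp_injective (fun m n h => by exact_mod_cast h)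
    -- moments over ℕ
    have hmomN : ∀ k : ℕ, 1 ≤ k →
        ∑' m : ℕ, (fourierCoeff (⇑f) (m : ℤ)) * (((((m : ℝ) + k + 1)⁻¹ : ℝ)) : ℂ) = 0 := by
      intro k hk
      have hz := hmomZ k hk
      set c : ℤ → ℂ :=
        fun i => (starRingEnd ℂ) (fourierCoeff g i) * fourierCoeff (⇑f) (i - k) with hc
      have hsupp : ∀ i : ℤ, c i ≠ 0 → (k : ℤ) ≤ i := by
        intro i hne
        by_contra hlt
        push_neg at hlt
        rcases lt_or_ge i 0 with h | h
        · exact hne (by simp only [hc, hneg i h, map_zero, zero_mul])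
        · exact hne (by simp only [hc, hfneg (i - k) (by omega), mul_zero])
      have hre : ∑' i : ℤ, c i = ∑' m : ℕ, c ((m : ℤ) + k) := by
        apply tsum_eq_tsum_of_ne_zero_bij (fun m => ((m : ℤ) : ℤ) + k)
        · intro x y hxy
          have h' := add_right_cancel hxy
          exact Subtype.ext (by exact_mod_cast h')
        · intro i hi
          have hki := hsupp i hi
          refine ⟨⟨(i - k).toNat, ?_⟩, ?_⟩
          · show c (((i - k).toNat : ℤ) + k) ≠ 0
            rw [Int.toNat_of_nonneg (by omega)]
            simpa [sub_add_cancel] using hi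
          · show (((i - k).toNat : ℤ)) + k = i
            rw [Int.toNat_of_nonneg (by omega)]
            ring
        · intro m
          rfl
      rw [hre] at hz
      rw [← hz]
      refine tsum_congr fun m => ?_
      simp only [hc]
      rw [add_sub_cancel_right, hpos ((m : ℤ) + k) (by positivity)]
      have hcast : ((((m : ℤ) + (k : ℤ) : ℤ) : ℂ) + 1) = ((((m : ℝ) + k + 1) : ℝ) : ℂ) := by
        push_cast
        ring
      rw [hcast, map_div₀, map_one, Complex.conj_ofReal, Complex.ofReal_inv]
      ring
    -- conclude all coefficients vanish
    have hzero : ∀ m : ℕ, fourierCoeff (⇑f) (m : ℤ) = 0 := by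
      intro m
      refine Part3.coeffs_zero m (fun n => fourierCoeff (⇑f) (n : ℤ)) ha ?_
      refine Part2.G_ae_zero ha ?_
      intro k hk
      rw [Stmt14Aux.integral_tk_G ha k]
      exact hmomN k hk
    have hall : ∀ i : ℤ, (fourierBasis (T := 2 * Real.pi)).repr f i = 0 := by
      intro i
      rw [fourierBasis_repr]
      rcases lt_or_ge i 0 with h | h
      · exact hfneg i h
      · have := hzero i.toNat
        rwa [Int.toNat_of_nonneg h] at this
    have hrzero : (fourierBasis (T := 2 * Real.pi)).repr f = 0 :=
      lp.ext (funext fun i => by simpa using hall i)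
    exact fourierBasis.repr.injective (hrzero.trans (map_zero fourierBasis.repr).symm)
  have htop : (Submodule.span ℂ S).topologicalClosure = ⊤ :=
    Submodule.topologicalClosure_eq_top_iff.2 hbot
  rw [← Submodule.topologicalClosure_coe, htop, Submodule.top_coe]
end
end

section
/- Let α be a nonzero complex number and consider f(z) = 1 + αz as an element of L² on the unit circle. The squared L²-distance from f to the closed linear span of the set {z^{-m}·(1+αz) : m ≥ 1} ∪ {z^{-m} : m ≥ 1} equals |α|². (This is the backward one-step prediction — postdiction — error variance for the first component of the moving-average process x_k = w_k + α w_{k-1}, y_k = w_k, and it differs from the forward prediction error 1 when |α| ≠ 1.) -/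
open MeasureTheory Complex Real Filter ComplexConjugate

noncomputable section

lemma aux_rep1 (m : ℕ) (α : ℂ) (u : L2)
    (hu : ⇑u =ᵐ[μc] fun x => fourier (-(m : ℤ)) x * (1 + α * fourier 1 x)) :
    u = fourierLp 2 (-(m : ℤ)) + α • fourierLp 2 (1 - (m : ℤ)) := by
  apply Lp.ext
  refine hu.trans ?_
  filter_upwards [coeFn_fourierLp (T := 2 * Real.pi) 2 (-(m : ℤ)),
    coeFn_fourierLp (T := 2 * Real.pi) 2 (1 - (m : ℤ)),
    Lp.coeFn_add (fourierLp 2 (-(m : ℤ)) : L2) (α • fourierLp 2 (1 - (m : ℤ))),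
    Lp.coeFn_smul α (fourierLp 2 (1 - (m : ℤ)) : L2)] with x e1 e2 e3 e4
  rw [e3, Pi.add_apply, e1, e4, Pi.smul_apply, e2]
  have h5 : (fourier (1 - (m : ℤ)) x : ℂ) = fourier 1 x * fourier (-(m : ℤ)) x := by
    rw [show (1:ℤ) - (m:ℤ) = 1 + -(m:ℤ) by ring, fourier_add]
  simp only [smul_eq_mul, h5]
  ring

lemma aux_rep2 (m : ℕ) (u : L2)
    (hu : ⇑u =ᵐ[μc] fun x => (fourier (-(m : ℤ)) x : ℂ)) :
    u = fourierLp 2 (-(m : ℤ)) := by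
  apply Lp.ext
  exact hu.trans (coeFn_fourierLp (T := 2 * Real.pi) 2 (-(m : ℤ))).symm

lemma aux_inner (i j : ℤ) :
    @inner ℂ _ _ (fourierLp 2 i : L2) (fourierLp 2 j) = if i = j then 1 else 0 := by
  have := orthonormal_iff_ite.mp (orthonormal_fourier (T := 2 * Real.pi))
  exact this i j


/-- Backward one-step (postdiction) error of the moving-average process `x_k = w_k + α w_{k-1}`,
`y_k = w_k`: the squared L²-distance from `1 + αz` to the closed span of
`{z⁻ᵐ(1+αz) : m ≥ 1} ∪ {z⁻ᵐ : m ≥ 1}` equals `|α|²`. -/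
theorem stmt16 (α : ℂ) (hα : α ≠ 0) (F : L2)
    (hF : ⇑F =ᵐ[μc] fun x => 1 + α * fourier 1 x) :
    (Metric.infDist F (closure ((Submodule.span ℂ
      ({u : L2 | ∃ m : ℕ, 1 ≤ m ∧
          ⇑u =ᵐ[μc] fun x => fourier (-(m : ℤ)) x * (1 + α * fourier 1 x)} ∪
       {u : L2 | ∃ m : ℕ, 1 ≤ m ∧ ⇑u =ᵐ[μc] fun x => (fourier (-(m : ℤ)) x : ℂ)}) :
        Submodule ℂ L2) : Set L2))) ^ 2 = ‖α‖ ^ 2 := by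
  set S : Set L2 :=
      ({u : L2 | ∃ m : ℕ, 1 ≤ m ∧
          ⇑u =ᵐ[μc] fun x => fourier (-(m : ℤ)) x * (1 + α * fourier 1 x)} ∪
       {u : L2 | ∃ m : ℕ, 1 ≤ m ∧ ⇑u =ᵐ[μc] fun x => (fourier (-(m : ℤ)) x : ℂ)}) with hS
  set M : Set L2 := closure ((Submodule.span ℂ S : Submodule ℂ L2) : Set L2) with hM
  set E : L2 := fourierLp 2 1 with hE
  -- F = fourierLp 0 + α • E
  have hFrep : F = fourierLp 2 (0 : ℤ) + α • E := by
    apply Lp.ext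
    refine hF.trans ?_
    filter_upwards [coeFn_fourierLp (T := 2 * Real.pi) 2 (0 : ℤ),
      coeFn_fourierLp (T := 2 * Real.pi) 2 (1 : ℤ),
      Lp.coeFn_add (fourierLp 2 (0 : ℤ) : L2) (α • E),
      Lp.coeFn_smul α E] with x e1 e2 e3 e4
    rw [e3, Pi.add_apply, e1, e4, Pi.smul_apply, e2, fourier_zero, smul_eq_mul]
  -- every element of M is orthogonal to E
  have horth : ∀ v ∈ M, @inner ℂ _ _ E v = 0 := by
    have hker : (Submodule.span ℂ S : Submodule ℂ L2) ≤
        LinearMap.ker (innerSL ℂ E : L2 →L[ℂ] ℂ).toLinearMap := by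
      rw [Submodule.span_le]
      rintro u (⟨m, hm, hu⟩ | ⟨m, hm, hu⟩)
      · rw [SetLike.mem_coe, LinearMap.mem_ker]
        have := aux_rep1 m α u hu
        simp only [ContinuousLinearMap.coe_coe, innerSL_apply_apply, this, inner_add_right,
          inner_smul_right, hE, aux_inner]
        have h1 : (1 : ℤ) ≠ -(m : ℤ) := by omega
        have h2 : (1 : ℤ) ≠ 1 - (m : ℤ) := by omega
        rw [if_neg h1, if_neg h2]; ring
      · rw [SetLike.mem_coe, LinearMap.mem_ker]
        have := aux_rep2 m u hu
        simp only [ContinuousLinearMap.coe_coe, innerSL_apply_apply, this, hE, aux_inner]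
        have h1 : (1 : ℤ) ≠ -(m : ℤ) := by omega
        rw [if_neg h1]
    intro v hv
    have hclosed : IsClosed ((LinearMap.ker (innerSL ℂ E : L2 →L[ℂ] ℂ).toLinearMap :
        Submodule ℂ L2) : Set L2) := by
      have := ContinuousLinearMap.isClosed_ker (innerSL ℂ E : L2 →L[ℂ] ℂ)
      convert this using 2
    have : v ∈ (LinearMap.ker (innerSL ℂ E : L2 →L[ℂ] ℂ).toLinearMap : Submodule ℂ L2) := by
      have := closure_minimal hker hclosed hv
      exact this
    simpa using this
  have hEnorm : ‖E‖ = 1 := (orthonormal_fourier (T := 2 * Real.pi)).1 1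
  have hinnerF : @inner ℂ _ _ E F = α := by
    rw [hFrep, inner_add_right, inner_smul_right, hE, aux_inner, aux_inner]
    norm_num
  -- g := fourierLp 0 belongs to M
  have hgmem : (fourierLp 2 (0 : ℤ) : L2) ∈ M := by
    apply subset_closure
    have hu1 : (fourierLp 2 (-(1:ℤ)) + α • fourierLp 2 (0:ℤ) : L2) ∈ S := by
      left
      refine ⟨1, le_refl 1, ?_⟩
      have := (aux_rep1 1 α (fourierLp 2 (-(1:ℤ)) + α • fourierLp 2 (0:ℤ)))
      -- instead construct directly
      filter_upwards [coeFn_fourierLp (T := 2 * Real.pi) 2 (-(1:ℤ)),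
        coeFn_fourierLp (T := 2 * Real.pi) 2 (0 : ℤ),
        Lp.coeFn_add (fourierLp 2 (-(1:ℤ)) : L2) (α • fourierLp 2 (0:ℤ)),
        Lp.coeFn_smul α (fourierLp 2 (0:ℤ) : L2)] with x e1 e2 e3 e4
      rw [e3, Pi.add_apply, e1, e4, Pi.smul_apply, e2]
      have h5 : (fourier (0 : ℤ) x : ℂ) = fourier 1 x * fourier (-(1:ℤ)) x := by
        rw [show (0:ℤ) = 1 + -(1:ℤ) by ring, fourier_add]
      push_cast
      simp only [smul_eq_mul, h5]
      ring
    have hu2 : (fourierLp 2 (-(1:ℤ)) : L2) ∈ S := by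
      right
      refine ⟨1, le_refl 1, ?_⟩
      push_cast
      exact coeFn_fourierLp (T := 2 * Real.pi) 2 (-(1:ℤ))
    have h1 : (fourierLp 2 (-(1:ℤ)) + α • fourierLp 2 (0:ℤ) : L2) ∈ Submodule.span ℂ S :=
      Submodule.subset_span hu1
    have h2 : (fourierLp 2 (-(1:ℤ)) : L2) ∈ Submodule.span ℂ S := Submodule.subset_span hu2
    have h3 : (α • fourierLp 2 (0:ℤ) : L2) ∈ Submodule.span ℂ S := by
      have := Submodule.sub_mem _ h1 h2
      simpa using this
    have h4 := Submodule.smul_mem _ α⁻¹ h3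
    rwa [smul_smul, inv_mul_cancel₀ hα, one_smul] at h4
  have hMne : M.Nonempty := ⟨_, hgmem⟩
  have hdist : Metric.infDist F M = ‖α‖ := by
    apply le_antisymm
    · have : dist F (fourierLp 2 (0 : ℤ)) = ‖α‖ := by
        rw [dist_eq_norm, hFrep]
        simp [norm_smul, hEnorm]
      calc Metric.infDist F M ≤ dist F (fourierLp 2 (0 : ℤ)) :=
            Metric.infDist_le_dist_of_mem hgmem
        _ = ‖α‖ := this
    · rw [Metric.infDist_eq_iInf]
      have : Nonempty M := hMne.to_subtype
      refine le_ciInf fun y => ?_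
      obtain ⟨v, hv⟩ := y
      have h1 : @inner ℂ _ _ E (F - v) = α := by
        rw [inner_sub_right, horth v hv, hinnerF, sub_zero]
      have h2 : ‖α‖ ≤ ‖E‖ * ‖F - v‖ := by
        rw [← h1]; exact norm_inner_le_norm E (F - v)
      rw [hEnorm, one_mul] at h2
      rwa [dist_eq_norm]
  rw [hdist]
end
end
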